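/- In the greedy insertion procedure that adds features one by one in a fixed order to a baseline, if at some step the accumulated feature set first becomes sufficient for class c, then the accumulated set contains an abductive explanation, and the last-added feature belongs to some abductive explanation contained in it. -/
import Mathlib


/-- in the greedy insertion procedure, when the prefix S_k first
becomes sufficient, it contains an abductive explanation, and every abductive
explanation contained in S_k contains the last-added feature p_k. -/
theorem stmt_15 {F : Type*} [Fintype F] [DecidableEq F] {D : F → Type*}
    [∀ i, Nonempty (D i)] {K : Type*}
    (f : (∀ i, D i) → K) (v : ∀ i, D i) (c : K) (hv : f v = c)
    (n : ℕ) (p : Fin n → F) (hp : Function.Bijective p)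
    (S : ℕ → Finset F)
    (hS : ∀ k, S k = (Finset.univ.filter (fun j : Fin n => (j : ℕ) < k)).image p)
    (k : ℕ) (hk1 : 1 ≤ k) (hkn : k ≤ n)
    -- S_k is sufficient
    (hsuff : ∀ x : ∀ i, D i, (∀ i ∈ S k, x i = v i) → f x = c)
    -- k is the first index at which the prefix becomes sufficient
    (hfirst : ∀ m < k, ¬ (∀ x : ∀ i, D i, (∀ i ∈ S m, x i = v i) → f x = c)) :
    -- (1) S_k contains an abductive explanation
    (∃ X : Finset F, X ⊆ S k ∧
      (∀ x : ∀ i, D i, (∀ i ∈ X, x i = v i) → f x = c) ∧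
      ∀ X' : Finset F, X' ⊂ X →
        ¬ (∀ x : ∀ i, D i, (∀ i ∈ X', x i = v i) → f x = c)) ∧
    -- (2) every abductive explanation contained in S_k contains p_k
    (∀ X : Finset F, X ⊆ S k →
      ((∀ x : ∀ i, D i, (∀ i ∈ X, x i = v i) → f x = c) ∧
        ∀ X' : Finset F, X' ⊂ X →
          ¬ (∀ x : ∀ i, D i, (∀ i ∈ X', x i = v i) → f x = c)) →
      p ⟨k - 1, by omega⟩ ∈ X) := by

  classical
  constructor
  · -- minimal-cardinality sufficient subset of S k
    set T := (S k).powerset.filter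
      (fun X => ∀ x : ∀ i, D i, (∀ i ∈ X, x i = v i) → f x = c) with hT
    have hTne : (S k) ∈ T := by
      simp only [hT, Finset.mem_filter, Finset.mem_powerset]
      exact ⟨subset_rfl, hsuff⟩
    obtain ⟨X, hXT, hXmin⟩ := T.exists_min_image Finset.card ⟨_, hTne⟩
    simp only [hT, Finset.mem_filter, Finset.mem_powerset] at hXT
    refine ⟨X, hXT.1, hXT.2, fun X' hX' hX'suff => ?_⟩
    have hX'T : X' ∈ T := by
      simp only [hT, Finset.mem_filter, Finset.mem_powerset]
      exact ⟨hX'.1.trans hXT.1, hX'suff⟩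
    have := hXmin X' hX'T
    have := Finset.card_lt_card hX'
    omega
  · rintro X hXS ⟨hXsuff, -⟩
    by_contra hpk
    -- then X ⊆ S (k-1), so S (k-1) is sufficient, contradiction
    have hXsub : X ⊆ S (k - 1) := by
      intro i hi
      have hi' := hXS hi
      rw [hS k] at hi'
      simp only [Finset.mem_image, Finset.mem_filter, Finset.mem_univ, true_and] at hi'
      obtain ⟨j, hj, rfl⟩ := hi'
      rw [hS (k - 1)]
      simp only [Finset.mem_image, Finset.mem_filter, Finset.mem_univ, true_and]
      refine ⟨j, ?_, rfl⟩
      rcases Nat.lt_or_ge (j : ℕ) (k - 1) with h | h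
      · exact h
      · exfalso
        have : (j : ℕ) = k - 1 := by omega
        have : j = ⟨k - 1, by omega⟩ := Fin.ext this
        rw [this] at hi
        exact hpk hi
    exact hfirst (k - 1) (by omega) (fun x hx => hXsuff x (fun i hi => hx i (hXsub hi)))
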